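/- Let κ be a cardinal and X ⊆ 2^κ the set of all functions with countable support {α : x(α) = 1}, with the subspace topology. Then X is a countably compact topological group under coordinatewise addition mod 2, X has countable tightness, X is homogeneous, and |X| = κ^ω. Hence countable tightness together with countable compactness and homogeneity does not bound cardinality by the continuum. -/

import Mathlib

open Set Cardinal TopologicalSpace

universe u

/-- `Y` is countably compact: every countable open cover has a finite subcover. -/
def CountablyCompact (Y : Type u) [TopologicalSpace Y] : Prop :=
  ∀ 𝒰 : Set (Set Y), 𝒰.Countable → (∀ u ∈ 𝒰, IsOpen u) → ⋃₀ 𝒰 = Set.univ →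
    ∃ 𝒱 ⊆ 𝒰, 𝒱.Finite ∧ ⋃₀ 𝒱 = Set.univ

/-- The tightness of `Y` is at most `κ`. -/
def TightnessLE (Y : Type u) [TopologicalSpace Y] (κ : Cardinal.{u}) : Prop :=
  ∀ (A : Set Y) (x : Y), x ∈ closure A → ∃ B ⊆ A, #B ≤ κ ∧ x ∈ closure B

section Aux

variable {ι : Type u}

/-- Countably many finsets inside a countable set. -/
lemma aux_countable_finsets {S : Set ι} (hS : S.Countable) :
    {F : Finset ι | ↑F ⊆ S}.Countable := by
  have h1 := Set.countable_setOf_finite_subset hS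
  have h2 : {F : Finset ι | ↑F ⊆ S}
      = (fun F : Finset ι => (F : Set ι)) ⁻¹' {t | t.Finite ∧ t ⊆ S} := by
    ext F; simp [Finset.finite_toSet]
  rw [h2]
  exact h1.preimage Finset.coe_injective

/-- Iterated support closure used in the tightness proof. -/
def tightSeq (f : Finset ι → Set ι) (s0 : Set ι) : ℕ → Set ι
  | 0 => s0
  | n + 1 => tightSeq f s0 n ∪ ⋃ F ∈ {F : Finset ι | ↑F ⊆ tightSeq f s0 n}, f F

variable [TopologicalSpace (ZMod 2)] [DiscreteTopology (ZMod 2)]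

lemma aux_topAddGroup : IsTopologicalAddGroup (ι → ZMod 2) := by
  haveI : IsTopologicalAddGroup (ZMod 2) :=
    { continuous_add := continuous_of_discreteTopology
      continuous_neg := continuous_of_discreteTopology }
  infer_instance

lemma aux_compactK (S : Set ι) :
    IsCompact {x : ι → ZMod 2 | ∀ i ∉ S, x i = 0} := by
  have hcl : IsClosed {x : ι → ZMod 2 | ∀ i ∉ S, x i = 0} := by
    have : {x : ι → ZMod 2 | ∀ i ∉ S, x i = 0} =
        ⋂ (i : ι) (_ : i ∉ S), (fun x : ι → ZMod 2 => x i) ⁻¹' {0} := by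
      ext x; simp [Set.mem_iInter]
    rw [this]
    exact isClosed_iInter fun i => isClosed_iInter fun _ =>
      IsClosed.preimage (continuous_apply i) isClosed_singleton
  exact hcl.isCompact

/-- The σ-product as an additive subgroup. -/
def sigmaSubgroup (ι : Type u) : AddSubgroup (ι → ZMod 2) where
  carrier := {x | {i | x i ≠ 0}.Countable}
  zero_mem' := by simp
  add_mem' := by
    intro a b ha hb
    refine (ha.union hb).mono ?_
    intro i hi
    by_contra h
    simp only [ne_eq] at h
    simp only [Set.mem_union, Set.mem_setOf_eq, not_or, not_not] at h
    exact hi (by simp [Pi.add_apply, h.1, h.2])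
  neg_mem' := by
    intro a ha
    have : {i | (-a) i ≠ 0} = {i | a i ≠ 0} := by
      ext i; simp [Pi.neg_apply, neg_eq_zero]
    show {i | (-a) i ≠ 0}.Countable
    rw [this]; exact ha

lemma aux_cc : CountablyCompact ↥{x : ι → ZMod 2 | {i | x i ≠ 0}.Countable} := by
  set X : Set (ι → ZMod 2) := {x | {i | x i ≠ 0}.Countable} with hXdef
  intro 𝒰 hcount hopen hcover
  by_contra hno
  push_neg at hno
  have hne : 𝒰.Nonempty := by
    rcases Set.eq_empty_or_nonempty 𝒰 with h | h
    · exfalso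
      rw [h, Set.sUnion_empty] at hcover
      have hx0 : (⟨0, by simp [hXdef]⟩ : ↥X) ∈ (∅ : Set ↥X) := hcover ▸ Set.mem_univ _
      exact hx0
    · exact h
  obtain ⟨u, hu⟩ := hcount.exists_eq_range hne
  have hxex : ∀ n : ℕ, ∃ z : ↥X, ∀ k ≤ n, z ∉ u k := by
    intro n
    have hsub : u '' {k | k ≤ n} ⊆ 𝒰 := by
      rintro v ⟨k, _, rfl⟩; rw [hu]; exact Set.mem_range_self k
    have hfin : (u '' {k | k ≤ n}).Finite := (Set.finite_le_nat n).image u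
    have hne2 := hno _ hsub hfin
    rcases (Set.ne_univ_iff_exists_notMem _).1 hne2 with ⟨z, hz⟩
    refine ⟨z, fun k hk hzk => hz ?_⟩
    exact Set.mem_sUnion.2 ⟨u k, ⟨k, hk, rfl⟩, hzk⟩
  choose xs hxs using hxex
  set S : Set ι := ⋃ n, {i | (xs n).1 i ≠ 0} with hSdef
  have hScount : S.Countable := Set.countable_iUnion fun n => (xs n).2
  set K' : Set ↥X := {z | ∀ i ∉ S, z.1 i = 0} with hKdef
  have hKcomp : IsCompact K' := by
    rw [Topology.IsEmbedding.subtypeVal.isCompact_iff]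
    have himg : Subtype.val '' K' = {x : ι → ZMod 2 | ∀ i ∉ S, x i = 0} := by
      ext z
      constructor
      · rintro ⟨w, hw, rfl⟩; exact hw
      · intro hz
        refine ⟨⟨z, hScount.mono fun i hi => ?_⟩, hz, rfl⟩
        by_contra h
        exact hi (hz i h)
    rw [himg]
    exact aux_compactK S
  have hKcover : K' ⊆ ⋃ n, u n := by
    intro z _
    have hz : z ∈ ⋃₀ 𝒰 := hcover ▸ Set.mem_univ z
    rw [hu, Set.sUnion_range] at hz
    exact hz
  obtain ⟨t, ht⟩ := hKcomp.elim_finite_subcover u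
    (fun n => hopen _ (hu ▸ Set.mem_range_self n)) hKcover
  have hxK : xs (t.sup id) ∈ K' := by
    intro i hi
    by_contra h
    exact hi (Set.mem_iUnion.2 ⟨t.sup id, h⟩)
  obtain ⟨n, hn, hmem⟩ := Set.mem_iUnion₂.1 (ht hxK)
  exact hxs (t.sup id) n (Finset.le_sup (f := id) hn) hmem

lemma aux_tight : TightnessLE ↥{x : ι → ZMod 2 | {i | x i ≠ 0}.Countable} ℵ₀ := by
  classical
  set X : Set (ι → ZMod 2) := {x | {i | x i ≠ 0}.Countable} with hXdef
  intro A x hx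
  have key : ∀ F : Finset ι, ∃ z, z ∈ A ∧ ∀ i ∈ F, z.1 i = x.1 i := by
    intro F
    have hopen : IsOpen {z : ↥X | ∀ i ∈ F, z.1 i = x.1 i} := by
      have heq : {z : ↥X | ∀ i ∈ F, z.1 i = x.1 i}
          = Subtype.val ⁻¹' (Set.pi ↑F fun i => {x.1 i}) := by
        ext z; simp [Set.mem_pi]
      rw [heq]
      exact (isOpen_set_pi F.finite_toSet fun i _ => isOpen_discrete _).preimage
        continuous_subtype_val
    have hxin : x ∈ {z : ↥X | ∀ i ∈ F, z.1 i = x.1 i} := fun i _ => rfl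
    rcases mem_closure_iff.1 hx _ hopen hxin with ⟨z, hz1, hz2⟩
    exact ⟨z, hz2, hz1⟩
  choose a haA hagree using key
  set S : ℕ → Set ι := tightSeq (fun F => {i | (a F).1 i ≠ 0}) {i | x.1 i ≠ 0} with hSdef
  have hcount : ∀ n, (S n).Countable := by
    intro n
    induction n with
    | zero => exact x.2
    | succ n ih =>
      refine ih.union ?_
      exact (aux_countable_finsets ih).biUnion fun F _ => (a F).2
  have hmono : Monotone S := monotone_nat_of_le_succ fun n => by
    intro i hi; exact Or.inl hi
  set Sω : Set ι := ⋃ n, S n with hSωdef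
  have hSωc : Sω.Countable := Set.countable_iUnion hcount
  have hfin : ∀ F : Finset ι, ↑F ⊆ Sω → ∃ n, ↑F ⊆ S n := by
    intro F hF
    have hex : ∀ i ∈ F, ∃ n, i ∈ S n := fun i hi => Set.mem_iUnion.1 (hF hi)
    choose g hg using hex
    refine ⟨F.attach.sup fun i => g i.1 i.2, fun i hi => ?_⟩
    exact hmono (Finset.le_sup (f := fun i : {x // x ∈ F} => g i.1 i.2)
      (Finset.mem_attach F ⟨i, hi⟩)) (hg i hi)
  refine ⟨a '' {F : Finset ι | ↑F ⊆ Sω}, ?_, ?_, ?_⟩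
  · rintro z ⟨F, _, rfl⟩; exact haA F
  · have hc : (a '' {F : Finset ι | ↑F ⊆ Sω}).Countable :=
      (aux_countable_finsets hSωc).image a
    haveI := hc.to_subtype
    exact Cardinal.mk_le_aleph0
  · rw [mem_closure_iff]
    intro o ho hxo
    rcases isOpen_induced_iff.1 ho with ⟨V, hV, rfl⟩
    rcases isOpen_pi_iff.1 hV x.1 hxo with ⟨F, vs, hvs, hsub⟩
    set G : Finset ι := F.filter (· ∈ Sω) with hGdef
    have hG : ↑G ⊆ Sω := fun i hi => (Finset.mem_filter.1 hi).2
    obtain ⟨n, hGn⟩ := hfin G hG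
    have hsupp : {i | (a G).1 i ≠ 0} ⊆ Sω := by
      intro i hi
      refine Set.mem_iUnion.2 ⟨n + 1, Or.inr ?_⟩
      exact Set.mem_iUnion₂.2 ⟨G, hGn, hi⟩
    refine ⟨a G, ?_, ⟨G, hG, rfl⟩⟩
    apply hsub
    intro i hi
    by_cases hiS : i ∈ Sω
    · have hiG : i ∈ G := Finset.mem_filter.2 ⟨hi, hiS⟩
      rw [hagree G i hiG]
      exact (hvs i hi).2
    · have h1 : x.1 i = 0 := by
        by_contra h; exact hiS (Set.mem_iUnion.2 ⟨0, h⟩)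
      have h2 : (a G).1 i = 0 := by
        by_contra h; exact hiS (hsupp h)
      show (a G).1 i ∈ vs i
      rw [h2, ← h1]
      exact (hvs i hi).2

lemma aux_homog (x y : ↥{x : ι → ZMod 2 | {i | x i ≠ 0}.Countable}) :
    ∃ e : ↥{x : ι → ZMod 2 | {i | x i ≠ 0}.Countable} ≃ₜ
      ↥{x : ι → ZMod 2 | {i | x i ≠ 0}.Countable}, e x = y := by
  haveI : ContinuousAdd (ZMod 2) := ⟨continuous_of_discreteTopology⟩
  have hadd : ∀ a b : ι → ZMod 2, {i | a i ≠ 0}.Countable → {i | b i ≠ 0}.Countable →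
      {i | (a + b) i ≠ 0}.Countable := by
    intro a b ha hb
    refine (ha.union hb).mono fun i hi => ?_
    by_contra h
    simp only [ne_eq] at h
    simp only [Set.mem_union, Set.mem_setOf_eq, not_or, not_not] at h
    exact hi (by simp [Pi.add_apply, h.1, h.2])
  have h2 : ∀ a b : ZMod 2, a + (a + b) = b := by decide
  have hmem : ∀ z : ↥{x : ι → ZMod 2 | {i | x i ≠ 0}.Countable},
      z.1 + (x.1 + y.1) ∈ {x : ι → ZMod 2 | {i | x i ≠ 0}.Countable} :=
    fun z => hadd _ _ z.2 (hadd _ _ x.2 y.2)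
  have hinv : ∀ z : ι → ZMod 2, z + (x.1 + y.1) + (x.1 + y.1) = z := by
    intro z
    funext i
    simp only [Pi.add_apply]
    calc z i + (x.1 i + y.1 i) + (x.1 i + y.1 i)
        = (x.1 i + y.1 i) + ((x.1 i + y.1 i) + z i) := by ring
      _ = z i := h2 _ _
  have hcont : Continuous fun z : ↥{x : ι → ZMod 2 | {i | x i ≠ 0}.Countable} =>
      (⟨z.1 + (x.1 + y.1), hmem z⟩ : ↥{x : ι → ZMod 2 | {i | x i ≠ 0}.Countable}) :=
    Continuous.subtype_mk (f := fun z : ↥{x : ι → ZMod 2 | {i | x i ≠ 0}.Countable} => z.1 + (x.1 + y.1)) (by fun_prop) _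
  refine ⟨{ toFun := fun z => ⟨z.1 + (x.1 + y.1), hmem z⟩
            invFun := fun z => ⟨z.1 + (x.1 + y.1), hmem z⟩
            left_inv := fun z => Subtype.ext (hinv z.1)
            right_inv := fun z => Subtype.ext (hinv z.1)
            continuous_toFun := hcont
            continuous_invFun := hcont }, ?_⟩
  apply Subtype.ext
  show x.1 + (x.1 + y.1) = y.1
  funext i
  simp only [Pi.add_apply]
  exact h2 _ _

end Aux

section Card
variable {ι : Type u}

lemma aux_card (κ : Cardinal.{u}) (hκ : ℵ₀ ≤ κ) (hι : #ι = κ) :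
    #↥{x : ι → ZMod 2 | {i | x i ≠ 0}.Countable} = κ ^ (ℵ₀ : Cardinal.{u}) := by
  classical
  have hone : ∀ a : ZMod 2, a ≠ 0 → a = 1 := by decide
  -- Step A : equiv with countable subsets
  have e1 : ↥{x : ι → ZMod 2 | {i | x i ≠ 0}.Countable} ≃ {S : Set ι // S.Countable} :=
    { toFun := fun x => ⟨{i | x.1 i ≠ 0}, x.2⟩
      invFun := fun S => ⟨fun i => if i ∈ S.1 then 1 else 0, by
        have h : {i | (if i ∈ S.1 then (1 : ZMod 2) else 0) ≠ 0} = S.1 := by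
          ext i; by_cases h : i ∈ S.1 <;> simp [h]
        show Set.Countable {i | (if i ∈ S.1 then (1 : ZMod 2) else 0) ≠ 0}
        rw [h]; exact S.2⟩
      left_inv := by
        intro x
        apply Subtype.ext
        funext i
        by_cases h : x.1 i = 0
        · simp [h]
        · simp [h, hone _ h]
      right_inv := by
        intro S
        apply Subtype.ext
        ext i; by_cases h : i ∈ S.1 <;> simp [h] }
  rw [Cardinal.mk_congr e1]
  -- Step B : cardinality of countable subsets
  apply le_antisymm
  · -- upper bound
    set r : (ULift.{u} ℕ → Option ι) → Set ι := fun g => {i | ∃ n, g n = some i} with hrdef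
    have hsurj : ∀ S : {S : Set ι // S.Countable}, ∃ g, r g = S.1 := by
      rintro ⟨S, hS⟩
      rcases S.eq_empty_or_nonempty with h | h
      · exact ⟨fun _ => none, by simp [hrdef, h]⟩
      · rcases hS.exists_eq_range h with ⟨f, rfl⟩
        refine ⟨fun n => some (f n.down), ?_⟩
        ext i
        simp only [hrdef, Set.mem_setOf_eq, Option.some.injEq, Set.mem_range]
        constructor
        · rintro ⟨n, hn⟩; exact ⟨n.down, hn⟩
        · rintro ⟨n, hn⟩; exact ⟨⟨n⟩, hn⟩
    have hinj : Function.Injective fun S : {S : Set ι // S.Countable} =>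
        (hsurj S).choose := by
      intro S T h
      apply Subtype.ext
      rw [← (hsurj S).choose_spec, ← (hsurj T).choose_spec]
      exact congrArg r h
    calc #{S : Set ι // S.Countable} ≤ #(ULift.{u} ℕ → Option ι) :=
          Cardinal.mk_le_of_injective hinj
      _ = #(Option ι) ^ #(ULift.{u} ℕ) := (Cardinal.power_def _ _).symm
      _ = (κ + 1) ^ (ℵ₀ : Cardinal.{u}) := by
          rw [Cardinal.mk_option, hι, Cardinal.mk_uLift, Cardinal.mk_nat, Cardinal.lift_aleph0]
      _ = κ ^ (ℵ₀ : Cardinal.{u}) := by rw [Cardinal.add_one_eq hκ]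
  · -- lower bound
    have hmk : #(ULift.{u} ℕ × ι) = #ι := by
      simp only [Cardinal.mk_prod, Cardinal.mk_uLift, Cardinal.mk_nat, Cardinal.lift_aleph0,
        Cardinal.lift_id, hι]
      exact Cardinal.mul_eq_right hκ hκ Cardinal.aleph0_ne_zero
    obtain ⟨e⟩ := Cardinal.eq.1 hmk
    have hinj : Function.Injective fun f : ULift.{u} ℕ → ι =>
        (⟨Set.range fun n => e (n, f n), Set.countable_range _⟩ :
          {S : Set ι // S.Countable}) := by
      intro f g h
      funext n
      have hset : (Set.range fun n => e (n, f n)) = Set.range fun m => e (m, g m) :=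
        congrArg Subtype.val h
      have hmem : e (n, f n) ∈ Set.range fun m => e (m, g m) :=
        hset ▸ Set.mem_range_self n
      rcases hmem with ⟨m, hm⟩
      have hp : (m, g m) = (n, f n) := e.injective hm
      have h1 : m = n := congrArg Prod.fst hp
      have hgm : g m = f n := congrArg Prod.snd hp
      rw [← hgm, h1]
    calc κ ^ (ℵ₀ : Cardinal.{u}) = #(ULift.{u} ℕ → ι) := by
          rw [← Cardinal.power_def, hι, Cardinal.mk_uLift, Cardinal.mk_nat,
            Cardinal.lift_aleph0]
      _ ≤ #{S : Set ι // S.Countable} := Cardinal.mk_le_of_injective hinj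

end Card



lemma aux_main {ι : Type u} [TopologicalSpace (ZMod 2)] [DiscreteTopology (ZMod 2)]
    (κ : Cardinal.{u}) (hκ : ℵ₀ ≤ κ) (hι : #ι = κ)
    (X : Set (ι → ZMod 2)) (hX : X = {x | {i | x i ≠ 0}.Countable}) :
    (∃ S : AddSubgroup (ι → ZMod 2), ↑S = X ∧ IsTopologicalAddGroup ↥S) ∧
      CountablyCompact ↥X ∧
      TightnessLE ↥X ℵ₀ ∧
      (∀ x y : ↥X, ∃ e : ↥X ≃ₜ ↥X, e x = y) ∧
      #↥X = κ ^ (ℵ₀ : Cardinal.{u}) := by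
  subst hX
  refine ⟨⟨sigmaSubgroup ι, rfl, ?_⟩, aux_cc, aux_tight, aux_homog, aux_card κ hκ hι⟩
  haveI := aux_topAddGroup (ι := ι)
  infer_instance

theorem sigma_product_countably_compact_homogeneous_group
    (κ : Cardinal.{u}) (hκ : ℵ₀ ≤ κ)
    (ι : Type u) (hι : #ι = κ) :
    letI : TopologicalSpace (ZMod 2) := ⊥
    ∀ X : Set (ι → ZMod 2), X = {x | {i | x i ≠ 0}.Countable} →
      (∃ S : AddSubgroup (ι → ZMod 2), ↑S = X ∧ IsTopologicalAddGroup ↥S) ∧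
      CountablyCompact ↥X ∧
      TightnessLE ↥X ℵ₀ ∧
      (∀ x y : ↥X, ∃ e : ↥X ≃ₜ ↥X, e x = y) ∧
      #↥X = κ ^ (ℵ₀ : Cardinal.{u}) := by
  intro X hX
  exact @aux_main ι ⊥ ⟨rfl⟩ κ hκ hι X hX
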